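/- All-bins concentration for simple tabulation with few bins (Theorem 1, equation (6)): for every constant c ≥ 1 and every constant γ > 0 there exists a constant C such that the following holds. Let h : Σ^c → [m] be a random simple tabulation hash function (m a power of two), and let S ⊆ Σ^c be a set of n ≥ m keys. Then with probability at least 1 − n^{−γ}, simultaneously for every bin b ∈ [m], the number of keys x ∈ S with h(x) = b lies in the interval n/m ± C·√(n/m)·(log n)^c. -/

import Mathlib

open scoped Classical
open Finset

/-- Bit strings of length `n`, identified with `(𝔽₂)^n`; bitwise XOR is
coordinatewise addition in `ZMod 2`.  This models the set `[2^n]`. -/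
abbrev Bits (n : ℕ) : Type := Fin n → ZMod 2

/-- Probability of an event under the uniform distribution on a finite sample space. -/
noncomputable def Pr {Ω : Type*} [Fintype Ω] (E : Ω → Prop) : ℝ :=
  ((Finset.univ.filter E).card : ℝ) / (Fintype.card Ω : ℝ)

/-- Simple tabulation hashing with `c` random character tables. -/
def simpleTab {c : ℕ} {A R : Type*} [AddCommMonoid R] (T : Fin c → A → R) (x : Fin c → A) : R :=
  ∑ i, T i (x i)

section Toolkit
variable {Ω : Type*} [Fintype Ω]

lemma card_filter_irrel {α : Type*} (s : Finset α) (p : α → Prop) (i1 i2 : DecidablePred p) :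
    @Finset.filter α p i1 s = @Finset.filter α p i2 s := by
  have : i1 = i2 := Subsingleton.elim _ _
  rw [this]

lemma Pr_def (E : Ω → Prop) (i : DecidablePred E) :
    Pr E = ((@Finset.filter Ω E i Finset.univ).card : ℝ) / (Fintype.card Ω : ℝ) := by
  unfold Pr
  rw [card_filter_irrel _ _ _ i]

lemma Pr_nonneg (E : Ω → Prop) : 0 ≤ Pr E := by
  unfold Pr; positivity

lemma Pr_le_one (E : Ω → Prop) : Pr E ≤ 1 := by
  unfold Pr
  rcases isEmpty_or_nonempty Ω with h | h
  · simp
  · rw [div_le_one (by exact_mod_cast Fintype.card_pos)]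
    rw [← Finset.card_univ]
    exact_mod_cast Finset.card_le_card (Finset.filter_subset _ _)

lemma Pr_mono {E F : Ω → Prop} (h : ∀ ω, E ω → F ω) : Pr E ≤ Pr F := by
  unfold Pr
  apply div_le_div_of_nonneg_right ?_ (Nat.cast_nonneg _)
  exact_mod_cast Finset.card_le_card (Finset.monotone_filter_right _ (fun ω _ => h ω))

lemma Pr_compl [Nonempty Ω] (E : Ω → Prop) : Pr (fun ω => ¬ E ω) = 1 - Pr E := by
  have hc : (0:ℝ) < Fintype.card Ω := by exact_mod_cast Fintype.card_pos
  have key : Pr E + Pr (fun ω => ¬ E ω) = 1 := by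
    unfold Pr
    rw [← add_div, div_eq_one_iff_eq (ne_of_gt hc)]
    rw [Finset.card_filter, Finset.card_filter, ← Nat.cast_add, ← Finset.sum_add_distrib]
    norm_cast
    refine Eq.trans (b := ∑ _x : Ω, (1:ℕ)) (Finset.sum_congr rfl (fun ω _ => ?_)) (by simp)
    by_cases h : E ω <;> simp [h]
  linarith

lemma Pr_eq_one [Nonempty Ω] {E : Ω → Prop} (h : ∀ ω, E ω) : Pr E = 1 := by
  unfold Pr
  rw [Finset.filter_true_of_mem (fun x _ => h x), Finset.card_univ]
  have hc : (0:ℝ) < Fintype.card Ω := by exact_mod_cast Fintype.card_pos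
  field_simp

lemma Pr_exists_le {ι : Type*} (A : Finset ι) (E : ι → Ω → Prop) :
    Pr (fun ω => ∃ i ∈ A, E i ω) ≤ ∑ i ∈ A, Pr (E i) := by
  rw [Pr_def _ inferInstance]
  have hPr : ∀ i, Pr (E i) = ((Finset.univ.filter (E i)).card : ℝ) / (Fintype.card Ω : ℝ) :=
    fun i => Pr_def _ _
  rw [Finset.sum_congr rfl (fun i _ => hPr i), ← Finset.sum_div]
  rcases isEmpty_or_nonempty Ω with hΩ | hΩ
  · simp
  apply div_le_div_of_nonneg_right ?_ (Nat.cast_nonneg _)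
  have hsub : (Finset.univ.filter (fun ω => ∃ i ∈ A, E i ω)) ⊆ A.biUnion (fun i => Finset.univ.filter (E i)) := by
    intro ω hω
    simp only [Finset.mem_filter, Finset.mem_biUnion, Finset.mem_univ, true_and] at *
    obtain ⟨i, hi, h⟩ := hω
    exact ⟨i, hi, h⟩
  have h1 := Finset.card_le_card hsub
  have h2 := Finset.card_biUnion_le (s := A) (t := fun i => Finset.univ.filter (E i))
  refine le_trans (α := ℝ) (b := ((A.biUnion (fun i => Finset.univ.filter (E i))).card : ℝ)) ?_ ?_
  · exact_mod_cast h1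
  · exact_mod_cast h2

lemma Pr_or_le (E F : Ω → Prop) : Pr (fun ω => E ω ∨ F ω) ≤ Pr E + Pr F := by
  have h := Pr_exists_le (Ω := Ω) ({true, false} : Finset Bool) (fun i ω => if i = true then E ω else F ω)
  refine le_trans (le_trans (Pr_mono ?_) h) ?_
  · intro ω hω
    rcases hω with h1 | h2
    · exact ⟨true, by simp, by simpa⟩
    · exact ⟨false, by simp, by simpa⟩
  · rw [Finset.sum_insert (by simp), Finset.sum_singleton]
    simp

end Toolkit
section Bernstein

open Real

lemma exp_le_one_add_add_sq {x : ℝ} (hx : |x| ≤ 1) : Real.exp x ≤ 1 + x + x ^ 2 := by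
  have h := Real.exp_bound hx (n := 2) (by norm_num)
  have h2 : ∑ m ∈ Finset.range 2, x ^ m / (m.factorial : ℝ) = 1 + x := by
    simp [Finset.sum_range_succ]
  rw [h2] at h
  have h3 : |x| ^ 2 * ((2:ℕ).succ / ((2:ℕ).factorial * (2:ℕ)) : ℝ) = x ^ 2 * (3/4) := by
    rw [sq_abs]; norm_num
  rw [h3] at h
  have := abs_le.mp h
  nlinarith [sq_nonneg x]

lemma avg_exp_le {β : Type*} [Fintype β] [Nonempty β] (g : β → ℝ)
    (hmean : ∑ v, g v = 0) (hbdd : ∀ v, |g v| ≤ 1) :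
    (∑ v, Real.exp (g v)) / (Fintype.card β : ℝ) ≤ Real.exp ((∑ v, (g v) ^ 2) / (Fintype.card β : ℝ)) := by
  have hcard : (0:ℝ) < Fintype.card β := by exact_mod_cast Fintype.card_pos
  have h1 : ∑ v, Real.exp (g v) ≤ ∑ v, (1 + g v + (g v) ^ 2) :=
    Finset.sum_le_sum (fun v _ => exp_le_one_add_add_sq (hbdd v))
  have h2 : ∑ v, (1 + g v + (g v) ^ 2) = (Fintype.card β : ℝ) + ∑ v, (g v) ^ 2 := by
    rw [Finset.sum_add_distrib, Finset.sum_add_distrib, hmean]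
    simp [Finset.card_univ, mul_comm]
  have h3 : (∑ v, Real.exp (g v)) / (Fintype.card β : ℝ) ≤ 1 + (∑ v, (g v) ^ 2) / (Fintype.card β : ℝ) := by
    rw [div_le_iff₀ hcard]
    calc ∑ v, Real.exp (g v) ≤ (Fintype.card β : ℝ) + ∑ v, (g v) ^ 2 := h1.trans (le_of_eq h2)
      _ = (1 + (∑ v, (g v) ^ 2) / (Fintype.card β : ℝ)) * (Fintype.card β : ℝ) := by
          field_simp
  refine h3.trans ?_
  have := Real.add_one_le_exp ((∑ v, (g v) ^ 2) / (Fintype.card β : ℝ))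
  linarith

lemma sum_pi_prod {α β : Type*} [Fintype α] [Fintype β] [DecidableEq α] (G : α → β → ℝ) :
    ∑ f : α → β, ∏ a, G a (f a) = ∏ a, ∑ v, G a v := by
  rw [Finset.prod_univ_sum (fun _ => (Finset.univ : Finset β)) G]
  rw [Fintype.piFinset_univ]

/-- Chernoff/Bernstein-type bound over a finite product space with counting measure. -/
lemma bernstein_counting {α β : Type*} [Fintype α] [Fintype β] [Nonempty β] [DecidableEq α]
    (A : Finset α) (g : α → β → ℝ) (u V : ℝ)
    (hmean : ∀ a ∈ A, ∑ v, g a v = 0)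
    (hbdd : ∀ a ∈ A, ∀ v, |g a v| ≤ 1)
    (hV : ∑ a ∈ A, (∑ v, (g a v) ^ 2) / (Fintype.card β : ℝ) ≤ V) :
    Pr (fun f : α → β => u ≤ ∑ a ∈ A, g a (f a)) ≤ Real.exp (V - u) := by
  classical
  have hcardβ : (0:ℝ) < Fintype.card β := by exact_mod_cast Fintype.card_pos
  have hcardΩ : (0:ℝ) < Fintype.card (α → β) := by exact_mod_cast Fintype.card_pos
  -- Markov step: card of filter ≤ ∑_f exp (∑ g - u)
  have markov : ((Finset.univ.filter (fun f : α → β => u ≤ ∑ a ∈ A, g a (f a))).card : ℝ)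
      ≤ ∑ f : α → β, Real.exp (∑ a ∈ A, g a (f a) - u) := by
    rw [← Finset.sum_filter_add_sum_filter_not Finset.univ (fun f : α → β => u ≤ ∑ a ∈ A, g a (f a))]
    have h1 : ((Finset.univ.filter (fun f : α → β => u ≤ ∑ a ∈ A, g a (f a))).card : ℝ)
        ≤ ∑ f ∈ Finset.univ.filter (fun f : α → β => u ≤ ∑ a ∈ A, g a (f a)),
            Real.exp (∑ a ∈ A, g a (f a) - u) := by
      rw [Finset.card_eq_sum_ones, Nat.cast_sum]
      refine Finset.sum_le_sum (fun f hf => ?_)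
      simp only [Finset.mem_filter] at hf
      have : (0:ℝ) ≤ ∑ a ∈ A, g a (f a) - u := by linarith [hf.2]
      calc ((1:ℕ):ℝ) = 1 := by norm_num
        _ ≤ Real.exp (∑ a ∈ A, g a (f a) - u) := by
            rw [show (1:ℝ) = Real.exp 0 from (Real.exp_zero).symm]
            exact Real.exp_le_exp.mpr this
    have h2 : (0:ℝ) ≤ ∑ f ∈ Finset.univ.filter (fun f : α → β => ¬ u ≤ ∑ a ∈ A, g a (f a)),
        Real.exp (∑ a ∈ A, g a (f a) - u) :=
      Finset.sum_nonneg (fun f _ => (Real.exp_pos _).le)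
    linarith
  -- factorize the expectation
  have hfact : ∑ f : α → β, Real.exp (∑ a ∈ A, g a (f a))
      = ∏ a, (if a ∈ A then ∑ v, Real.exp (g a v) else (Fintype.card β : ℝ)) := by
    have e1 : ∀ f : α → β, Real.exp (∑ a ∈ A, g a (f a))
        = ∏ a, (if a ∈ A then Real.exp (g a (f a)) else 1) := by
      intro f
      rw [Real.exp_sum, Finset.prod_ite_mem, Finset.univ_inter]
    rw [Finset.sum_congr rfl (fun f _ => e1 f),
      sum_pi_prod (fun a v => if a ∈ A then Real.exp (g a v) else 1)]
    refine Finset.prod_congr rfl (fun a _ => ?_)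
    by_cases h : a ∈ A <;> simp [h, Finset.card_univ]
  -- bound each factor
  have hprod : ∏ a, ((if a ∈ A then ∑ v, Real.exp (g a v) else (Fintype.card β : ℝ)) / (Fintype.card β : ℝ))
      ≤ Real.exp V := by
    have hbd : ∀ a, (if a ∈ A then ∑ v, Real.exp (g a v) else (Fintype.card β : ℝ)) / (Fintype.card β : ℝ)
        ≤ (if a ∈ A then Real.exp ((∑ v, (g a v) ^ 2) / (Fintype.card β : ℝ)) else 1) := by
      intro a
      by_cases h : a ∈ A
      · simp only [h, if_true]
        exact avg_exp_le (g a) (hmean a h) (hbdd a h)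
      · simp only [h, if_false]
        rw [div_self (ne_of_gt hcardβ)]
    have hnn : ∀ a, (0:ℝ) ≤ (if a ∈ A then ∑ v, Real.exp (g a v) else (Fintype.card β : ℝ)) / (Fintype.card β : ℝ) := by
      intro a
      apply div_nonneg _ hcardβ.le
      by_cases h : a ∈ A <;> simp [h, hcardβ.le]
      exact Finset.sum_nonneg (fun v _ => (Real.exp_pos _).le)
    calc ∏ a, ((if a ∈ A then ∑ v, Real.exp (g a v) else (Fintype.card β : ℝ)) / (Fintype.card β : ℝ))
        ≤ ∏ a, (if a ∈ A then Real.exp ((∑ v, (g a v) ^ 2) / (Fintype.card β : ℝ)) else 1) :=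
          Finset.prod_le_prod (fun a _ => hnn a) (fun a _ => hbd a)
      _ = ∏ a ∈ A, Real.exp ((∑ v, (g a v) ^ 2) / (Fintype.card β : ℝ)) := by
          rw [Finset.prod_ite_mem, Finset.univ_inter]
      _ = Real.exp (∑ a ∈ A, (∑ v, (g a v) ^ 2) / (Fintype.card β : ℝ)) := (Real.exp_sum _ _).symm
      _ ≤ Real.exp V := Real.exp_le_exp.mpr hV
  -- assemble
  rw [Pr_def _ inferInstance]
  rw [div_le_iff₀ hcardΩ]
  have hcards : (Fintype.card (α → β) : ℝ) = ∏ _a : α, (Fintype.card β : ℝ) := by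
    rw [Fintype.card_fun]; push_cast; rw [Finset.prod_const, Finset.card_univ]
  calc ((Finset.univ.filter (fun f : α → β => u ≤ ∑ a ∈ A, g a (f a))).card : ℝ)
      ≤ ∑ f : α → β, Real.exp (∑ a ∈ A, g a (f a) - u) := markov
    _ = Real.exp (-u) * ∑ f : α → β, Real.exp (∑ a ∈ A, g a (f a)) := by
        rw [Finset.mul_sum]
        refine Finset.sum_congr rfl (fun f _ => ?_)
        rw [← Real.exp_add]; ring_nf
    _ = Real.exp (-u) * ∏ a, (if a ∈ A then ∑ v, Real.exp (g a v) else (Fintype.card β : ℝ)) := by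
        rw [hfact]
    _ ≤ Real.exp (-u) * (Real.exp V * ∏ _a : α, (Fintype.card β : ℝ)) := by
        have h := hprod
        rw [Finset.prod_div_distrib] at h
        have hpos : (0:ℝ) < ∏ _a : α, (Fintype.card β : ℝ) := Finset.prod_pos (fun _ _ => hcardβ)
        rw [div_le_iff₀ hpos] at h
        exact mul_le_mul_of_nonneg_left h (Real.exp_pos _).le
    _ = Real.exp (V - u) * (Fintype.card (α → β) : ℝ) := by
        rw [hcards, ← mul_assoc, ← Real.exp_add]
        have : -u + V = V - u := by ring
        rw [this]
section PiSplit
variable {F : Type*} [Fintype F] {c : ℕ}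

lemma card_filter_pi_succ' (P : (Fin (c+1) → F) → Prop) :
    (Finset.univ.filter P).card
      = ∑ w : Fin c → F, (Finset.univ.filter (fun f : F => P (Fin.cons f w))).card := by
  classical
  rw [Finset.card_filter]
  have h1 : ∑ T : Fin (c+1) → F, (if P T then 1 else 0)
      = ∑ p : F × (Fin c → F), (if P (Fin.cons p.1 p.2) then 1 else 0) := by
    refine (Fintype.sum_equiv (Fin.consEquiv (fun _ : Fin (c+1) => F)) _ _ (fun p => ?_)).symm
    rfl
  rw [h1, Fintype.sum_prod_type_right]
  refine Finset.sum_congr rfl (fun w _ => ?_)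
  rw [Finset.card_filter]

lemma card_univ_pi_succ : Fintype.card (Fin (c+1) → F) = Fintype.card F * Fintype.card (Fin c → F) := by
  simp [Fintype.card_fun, pow_succ, mul_comm]

lemma Pr_tail [Nonempty F] (P : (Fin c → F) → Prop) :
    Pr (fun T : Fin (c+1) → F => P (Fin.tail T)) = Pr P := by
  unfold Pr
  rw [card_filter_pi_succ' (fun T => P (Fin.tail T))]
  have hF : (0:ℝ) < Fintype.card F := by exact_mod_cast Fintype.card_pos
  have hW : (0:ℝ) < Fintype.card (Fin c → F) := by exact_mod_cast Fintype.card_pos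
  rw [Finset.card_filter P, card_univ_pi_succ]
  refine Eq.trans (b := ((∑ w : Fin c → F, Fintype.card F * (if P w then 1 else 0) : ℕ) : ℝ)
      / ((Fintype.card F * Fintype.card (Fin c → F) : ℕ) : ℝ))
      (congrArg (fun n : ℕ =>
      (n:ℝ) / ((Fintype.card F * Fintype.card (Fin c → F) : ℕ) : ℝ))
      (Finset.sum_congr rfl (fun w _ => ?_))) ?_
  · show (Finset.univ.filter (fun f : F => P (Fin.tail ((Fin.cons f w) : Fin (c+1) → F)))).card
      = Fintype.card F * (if P w then 1 else 0)
    have hc : Finset.univ.filter (fun f : F => P (Fin.tail ((Fin.cons f w) : Fin (c+1) → F)))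
        = Finset.univ.filter (fun _ : F => P w) :=
      Finset.filter_congr (fun f _ => by rw [Fin.tail_cons])
    rw [hc]
    by_cases h : P w
    · rw [Finset.filter_true_of_mem (fun _ _ => h), Finset.card_univ, if_pos h, mul_one]
    · rw [Finset.filter_false_of_mem (fun _ _ => h), Finset.card_empty, if_neg h, mul_zero]
  · rw [← Finset.mul_sum]
    push_cast
    field_simp

lemma Pr_cons_cond [Nonempty F] (G : (Fin c → F) → Prop) (E : (Fin (c+1) → F) → Prop)
    (q : ℝ) (hq : 0 ≤ q)
    (h : ∀ w, G w → Pr (fun f : F => E (Fin.cons f w)) ≤ q) :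
    Pr (fun T : Fin (c+1) → F => G (Fin.tail T) ∧ E T) ≤ q := by
  unfold Pr
  rw [card_filter_pi_succ' (fun T => G (Fin.tail T) ∧ E T)]
  have hF : (0:ℝ) < Fintype.card F := by exact_mod_cast Fintype.card_pos
  have hW : (0:ℝ) < Fintype.card (Fin c → F) := by exact_mod_cast Fintype.card_pos
  rw [card_univ_pi_succ, div_le_iff₀ (by push_cast; positivity), Nat.cast_sum]
  refine le_trans (Finset.sum_le_sum (s := (Finset.univ : Finset (Fin c → F)))
    (g := fun _ => q * (Fintype.card F : ℝ)) (fun w _ => ?_)) ?_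
  · rw [card_filter_irrel Finset.univ _ _ inferInstance]
    by_cases hG : G w
    · have hle := Finset.card_le_card (Finset.monotone_filter_right (Finset.univ : Finset F)
        (show ∀ f ∈ (Finset.univ : Finset F), (G (Fin.tail ((Fin.cons f w) : Fin (c+1) → F)) ∧ E (Fin.cons f w))
            → E (Fin.cons f w) from fun f _ hf => hf.2))
      have h2 := h w hG
      unfold Pr at h2
      rw [div_le_iff₀ hF] at h2
      refine le_trans ?_ h2
      exact_mod_cast hle
    · refine le_trans (le_of_eq ?_) (mul_nonneg hq (Nat.cast_nonneg _))
      norm_cast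
      rw [Finset.card_eq_zero]
      refine Finset.filter_false_of_mem (fun f _ => ?_)
      rw [Fin.tail_cons]
      exact fun hc => hG hc.1
  · rw [Finset.sum_const, Finset.card_univ, nsmul_eq_mul]
    push_cast
    ring_nf
    exact le_refl _

end PiSplit
section Identities
variable {s r c : ℕ}

lemma card_bits (r : ℕ) : Fintype.card (Bits r) = 2 ^ r := by
  rw [Fintype.card_fun]
  simp

/-- keys of `S` whose first character is `a`, with the first character removed -/
noncomputable def tailSet (S : Finset (Fin (c+1) → Bits s)) (a : Bits s) :
    Finset (Fin c → Bits s) := (S.filter (fun x => x 0 = a)).image Fin.tail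

noncomputable def headSet (S : Finset (Fin (c+1) → Bits s)) : Finset (Bits s) :=
  S.image (fun x => x 0)

lemma card_tailSet (S : Finset (Fin (c+1) → Bits s)) (a : Bits s) :
    (tailSet S a).card = (S.filter (fun x => x 0 = a)).card := by
  unfold tailSet
  apply Finset.card_image_of_injOn
  intro x hx y hy hxy
  simp only [Finset.coe_filter, Set.mem_setOf_eq, Finset.mem_coe] at hx hy
  have : x = Fin.cons (x 0) (Fin.tail x) := (Fin.cons_self_tail x).symm
  rw [this, hx.2, hxy, ← hy.2, Fin.cons_self_tail]

lemma card_tailSet_le (S : Finset (Fin (c+1) → Bits s)) (a : Bits s) :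
    (tailSet S a).card ≤ S.card := by
  rw [card_tailSet]; exact Finset.card_filter_le _ _

lemma sum_card_tailSet (S : Finset (Fin (c+1) → Bits s)) :
    ∑ a ∈ headSet S, (tailSet S a).card = S.card := by
  rw [Finset.sum_congr rfl (fun a _ => card_tailSet S a)]
  exact (Finset.card_eq_sum_card_fiberwise (fun x hx => Finset.mem_image_of_mem _ hx)).symm

lemma card_headSet_le (S : Finset (Fin (c+1) → Bits s)) : (headSet S).card ≤ S.card :=
  Finset.card_image_le

lemma simpleTab_succ (T : Fin (c+1) → Bits s → Bits r) (x : Fin (c+1) → Bits s) :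
    simpleTab T x = T 0 (x 0) + simpleTab (Fin.tail T) (Fin.tail x) :=
  Fin.sum_univ_succ _

/-- number of tail-keys of group `a` hashed to `v` by the tail tables -/
noncomputable def grpCount (S : Finset (Fin (c+1) → Bits s))
    (w : Fin c → Bits s → Bits r) (a : Bits s) (v : Bits r) : ℕ :=
  ((tailSet S a).filter (fun y => simpleTab w y = v)).card

lemma grpCount_le (S : Finset (Fin (c+1) → Bits s)) (w : Fin c → Bits s → Bits r)
    (a : Bits s) (v : Bits r) : grpCount S w a v ≤ (tailSet S a).card :=
  Finset.card_filter_le _ _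

lemma sum_grpCount (S : Finset (Fin (c+1) → Bits s)) (w : Fin c → Bits s → Bits r) (a : Bits s) :
    ∑ v : Bits r, grpCount S w a v = (tailSet S a).card := by
  unfold grpCount
  exact (Finset.card_eq_sum_card_fiberwise (fun y _ => Finset.mem_univ _)).symm

lemma sum_shift {M : Type*} [AddCommMonoid M] (b : Bits r) (F : Bits r → M) :
    ∑ u : Bits r, F (b - u) = ∑ v : Bits r, F v :=
  Equiv.sum_comp (Equiv.subLeft b) F

lemma count_split (S : Finset (Fin (c+1) → Bits s)) (T : Fin (c+1) → Bits s → Bits r) (b : Bits r) :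
    (S.filter (fun x => simpleTab T x = b)).card
      = ∑ a ∈ headSet S, grpCount S (Fin.tail T) a (b - T 0 a) := by
  have hfib := Finset.card_eq_sum_card_fiberwise
    (f := fun x : Fin (c+1) → Bits s => x 0)
    (s := S.filter (fun x => simpleTab T x = b)) (t := headSet S)
    (fun x hx => Finset.mem_image_of_mem _ (Finset.mem_filter.mp hx).1)
  rw [hfib]
  refine Finset.sum_congr rfl (fun a _ => ?_)
  unfold grpCount
  apply Finset.card_bij (fun x _ => Fin.tail x)
  · intro x hx
    simp only [Finset.mem_filter] at hx
    obtain ⟨⟨hxS, hxb⟩, hxa⟩ := hx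
    rw [Finset.mem_filter]
    constructor
    · exact Finset.mem_image_of_mem _ (Finset.mem_filter.mpr ⟨hxS, hxa⟩)
    · rw [simpleTab_succ, hxa] at hxb
      rw [eq_sub_iff_add_eq]
      rw [add_comm]
      exact hxb
  · intro x1 h1 x2 h2 heq
    simp only [Finset.mem_filter] at h1 h2
    have e1 : x1 = Fin.cons (x1 0) (Fin.tail x1) := (Fin.cons_self_tail x1).symm
    rw [e1, h1.2, heq, ← h2.2, Fin.cons_self_tail]
  · intro y hy
    rw [Finset.mem_filter] at hy
    obtain ⟨hyt, hyv⟩ := hy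
    unfold tailSet at hyt
    rw [Finset.mem_image] at hyt
    obtain ⟨x, hx, hxy⟩ := hyt
    rw [Finset.mem_filter] at hx
    refine ⟨x, ?_, hxy⟩
    rw [Finset.mem_filter, Finset.mem_filter]
    refine ⟨⟨hx.1, ?_⟩, hx.2⟩
    rw [simpleTab_succ, hx.2, hxy, hyv]
    rw [add_sub_cancel]

end Identities
section PerBin

lemma two_pow_cast (r : ℕ) : ((2 ^ r : ℕ) : ℝ) = (2:ℝ) ^ r := by push_cast; rfl

set_option maxHeartbeats 1000000 in
lemma perbin_tail {s r c : ℕ} (S : Finset (Fin (c+1) → Bits s)) (C' L : ℝ)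
    (hC' : 1 ≤ C') (hL : 1 ≤ L)
    (w : Fin c → Bits s → Bits r)
    (hGood : ∀ a ∈ headSet S, ∀ v : Bits r,
      |((grpCount S w a v : ℝ)) - ((tailSet S a).card : ℝ) / (2:ℝ)^r|
        ≤ C' * (Real.sqrt (((tailSet S a).card : ℝ) / (2:ℝ)^r) + 1) * L ^ c)
    (b : Bits r) (u : ℝ) (hu : 0 ≤ u) :
    Pr (fun f : Bits s → Bits r =>
        ¬ |(∑ a ∈ headSet S, (grpCount S w a (b - f a) : ℝ)) - (S.card : ℝ) / (2:ℝ)^r|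
            ≤ u * (C' * (Real.sqrt ((S.card:ℝ) / (2:ℝ)^r) + 1) * L ^ c))
      ≤ 2 * Real.exp (4 - u) := by
  classical
  set mr : ℝ := (2:ℝ)^r with hmr
  set n : ℝ := (S.card : ℝ) with hn
  set A := headSet S with hA
  set na : Bits s → ℝ := fun a => ((tailSet S a).card : ℝ) with hna
  set M : ℝ := C' * (Real.sqrt (n / mr) + 1) * L ^ c with hM
  set D : Bits s → ℝ := fun a => C' * (Real.sqrt (na a / mr) + 1) * L ^ c with hD
  set g : Bits s → Bits r → ℝ :=
    fun a v => (1 / M) * ((grpCount S w a (b - v) : ℝ) - na a / mr) with hg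
  -- pre-clear facts that need definitional unfolding
  have hmrpos : 0 < mr := by rw [hmr]; positivity
  have hn0 : 0 ≤ n := by rw [hn]; exact Nat.cast_nonneg _
  have hnapos : ∀ a, 0 ≤ na a := by
    intro a; simp only [hna]; exact Nat.cast_nonneg _
  have hnan : ∀ a, na a ≤ n := by
    intro a; simp only [hna, hn]; exact_mod_cast card_tailSet_le S a
  have hsumcount : ∀ a, ∑ v : Bits r, (grpCount S w a (b - v) : ℝ) = na a := by
    intro a
    rw [sum_shift b (fun v => (grpCount S w a v : ℝ))]
    simp only [hna]
    exact_mod_cast sum_grpCount S w a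
  have hsumna : ∑ a ∈ A, na a = n := by
    simp only [hna, hn, hA]
    exact_mod_cast sum_card_tailSet S
  have hcardβ : (Fintype.card (Bits r) : ℝ) = mr := by
    rw [card_bits, hmr, two_pow_cast]
  have hL0 : (0:ℝ) < L := lt_of_lt_of_le one_pos hL
  have hC0 : (0:ℝ) < C' := lt_of_lt_of_le one_pos hC'
  have hLc : 1 ≤ L ^ c := one_le_pow₀ hL
  have hLcpos : (0:ℝ) < L ^ c := pow_pos hL0 c
  clear_value mr n A na M D g
  have hsum_const : ∀ x : ℝ, ∑ _v : Bits r, x = mr * x := by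
    intro x
    rw [Finset.sum_const, Finset.card_univ, nsmul_eq_mul, hcardβ]
  have hsqrt_n : Real.sqrt (n / mr) ^ 2 = n / mr := Real.sq_sqrt (div_nonneg hn0 hmrpos.le)
  have hMpos : 0 < M := by
    rw [hM]
    exact mul_pos (mul_pos hC0
      (add_pos_of_nonneg_of_pos (Real.sqrt_nonneg _) one_pos)) hLcpos
  have hDpos : ∀ a, 0 < D a := fun a => by
    rw [hD]
    exact mul_pos (mul_pos hC0
      (add_pos_of_nonneg_of_pos (Real.sqrt_nonneg _) one_pos)) hLcpos
  have hDM : ∀ a, D a ≤ M := by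
    intro a
    rw [hD, hM]
    have h1 : Real.sqrt (na a / mr) ≤ Real.sqrt (n / mr) :=
      Real.sqrt_le_sqrt (div_le_div_of_nonneg_right (hnan a) hmrpos.le)
    exact mul_le_mul_of_nonneg_right
      (mul_le_mul_of_nonneg_left (by linarith) hC0.le) hLcpos.le
  have hmean : ∀ a ∈ A, ∑ v, g a v = 0 := by
    intro a _
    simp only [hg]
    rw [← Finset.mul_sum, Finset.sum_sub_distrib, hsumcount, hsum_const]
    rw [mul_div_cancel₀ _ (ne_of_gt hmrpos)]
    simp
  have hZbdd : ∀ a ∈ A, ∀ v : Bits r, |(grpCount S w a (b - v) : ℝ) - na a / mr| ≤ D a := by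
    intro a ha v
    have h0 := hGood a ha (b - v)
    simp only [hD, hna]
    exact h0
  have hbdd : ∀ a ∈ A, ∀ v : Bits r, |g a v| ≤ 1 := by
    intro a ha v
    simp only [hg, abs_mul]
    rw [abs_of_nonneg (one_div_pos.mpr hMpos).le]
    have h1 := hZbdd a ha v
    have h2 := hDM a
    rw [div_mul_eq_mul_div, div_le_one hMpos]
    nlinarith [abs_nonneg ((grpCount S w a (b - v) : ℝ) - na a / mr)]
  -- variance bound
  have hvar : ∀ a ∈ A, (∑ v, (g a v) ^ 2) / (Fintype.card (Bits r) : ℝ)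
      ≤ 4 * C' ^ 2 * (na a / mr) * (L ^ c * L ^ c) / M ^ 2 := by
    intro a ha
    have habs : ∀ v : Bits r, |(grpCount S w a (b - v) : ℝ) - na a / mr| ≤ D a := hZbdd a ha
    have hS1 : ∑ v : Bits r, |(grpCount S w a (b - v) : ℝ) - na a / mr| ≤ 2 * na a := by
      have h1 : ∀ v : Bits r, |(grpCount S w a (b - v) : ℝ) - na a / mr|
          ≤ (grpCount S w a (b - v) : ℝ) + na a / mr := by
        intro v
        refine (abs_sub _ _).trans ?_
        rw [abs_of_nonneg (Nat.cast_nonneg _), abs_of_nonneg (div_nonneg (hnapos a) hmrpos.le)]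
      refine (Finset.sum_le_sum (fun v _ => h1 v)).trans ?_
      rw [Finset.sum_add_distrib, hsumcount, hsum_const]
      rw [mul_div_cancel₀ _ (ne_of_gt hmrpos)]
      linarith [hnapos a]
    have hS2 : ∑ v : Bits r, ((grpCount S w a (b - v) : ℝ) - na a / mr) ^ 2
        ≤ D a * (2 * na a) := by
      have h1 : ∀ v : Bits r, ((grpCount S w a (b - v) : ℝ) - na a / mr) ^ 2
          ≤ D a * |(grpCount S w a (b - v) : ℝ) - na a / mr| := by
        intro v
        have h3 := habs v
        have h2 := abs_nonneg ((grpCount S w a (b - v) : ℝ) - na a / mr)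
        calc ((grpCount S w a (b - v) : ℝ) - na a / mr) ^ 2
            = |(grpCount S w a (b - v) : ℝ) - na a / mr| ^ 2 := (sq_abs _).symm
          _ ≤ D a * |(grpCount S w a (b - v) : ℝ) - na a / mr| := by nlinarith
      refine (Finset.sum_le_sum (fun v _ => h1 v)).trans ?_
      rw [← Finset.mul_sum]
      have := hDpos a
      nlinarith [hS1]
    have hS3 : ∑ v : Bits r, ((grpCount S w a (b - v) : ℝ) - na a / mr) ^ 2
        ≤ mr * D a ^ 2 := by
      have h1 : ∀ v : Bits r, ((grpCount S w a (b - v) : ℝ) - na a / mr) ^ 2 ≤ D a ^ 2 := by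
        intro v
        have h3 := habs v
        have h2 := abs_nonneg ((grpCount S w a (b - v) : ℝ) - na a / mr)
        nlinarith [sq_abs ((grpCount S w a (b - v) : ℝ) - na a / mr)]
      refine (Finset.sum_le_sum (fun v _ => h1 v)).trans ?_
      rw [hsum_const]
    have hgsq : ∑ v, (g a v) ^ 2
        = (1 / M ^ 2) * ∑ v : Bits r, ((grpCount S w a (b - v) : ℝ) - na a / mr) ^ 2 := by
      rw [Finset.mul_sum]
      refine Finset.sum_congr rfl (fun v _ => ?_)
      simp only [hg]
      ring
    have hkey : (∑ v : Bits r, ((grpCount S w a (b - v) : ℝ) - na a / mr) ^ 2) / mr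
        ≤ 4 * C' ^ 2 * (na a / mr) * (L ^ c * L ^ c) := by
      by_cases hcase : mr ≤ na a
      · -- big group: use D² bound
        have hsq1 : 1 ≤ Real.sqrt (na a / mr) := by
          rw [show (1:ℝ) = Real.sqrt 1 from (Real.sqrt_one).symm]
          exact Real.sqrt_le_sqrt (by rw [le_div_iff₀ hmrpos]; linarith)
        have hsqrt_sq : Real.sqrt (na a / mr) ^ 2 = na a / mr :=
          Real.sq_sqrt (div_nonneg (hnapos a) hmrpos.le)
        have hDa : D a ≤ 2 * C' * Real.sqrt (na a / mr) * L ^ c := by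
          rw [hD]
          calc C' * (Real.sqrt (na a / mr) + 1) * L ^ c
              ≤ C' * (2 * Real.sqrt (na a / mr)) * L ^ c :=
                mul_le_mul_of_nonneg_right
                  (mul_le_mul_of_nonneg_left (by linarith) hC0.le) hLcpos.le
            _ = 2 * C' * Real.sqrt (na a / mr) * L ^ c := by ring
        have hD2 : D a ^ 2 ≤ 4 * C' ^ 2 * (na a / mr) * (L ^ c * L ^ c) := by
          have h1 : D a ^ 2 ≤ (2 * C' * Real.sqrt (na a / mr) * L ^ c) ^ 2 :=
            pow_le_pow_left₀ (hDpos a).le hDa 2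
          refine h1.trans (le_of_eq ?_)
          rw [show (2 * C' * Real.sqrt (na a / mr) * L ^ c) ^ 2
              = 4 * C' ^ 2 * (Real.sqrt (na a / mr) ^ 2) * (L ^ c * L ^ c) from by ring]
          rw [hsqrt_sq]
        rw [div_le_iff₀ hmrpos]
        calc (∑ v : Bits r, ((grpCount S w a (b - v) : ℝ) - na a / mr) ^ 2)
            ≤ mr * D a ^ 2 := hS3
          _ ≤ mr * (4 * C' ^ 2 * (na a / mr) * (L ^ c * L ^ c)) :=
              mul_le_mul_of_nonneg_left hD2 hmrpos.le
          _ = 4 * C' ^ 2 * (na a / mr) * (L ^ c * L ^ c) * mr := by ring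
      · -- small group
        push_neg at hcase
        have hsq1 : Real.sqrt (na a / mr) ≤ 1 := by
          rw [show (1:ℝ) = Real.sqrt 1 from (Real.sqrt_one).symm]
          exact Real.sqrt_le_sqrt (by rw [div_le_one hmrpos]; linarith)
        have hDa : D a ≤ 2 * C' * L ^ c := by
          rw [hD]
          calc C' * (Real.sqrt (na a / mr) + 1) * L ^ c
              ≤ C' * 2 * L ^ c :=
                mul_le_mul_of_nonneg_right
                  (mul_le_mul_of_nonneg_left (by linarith) hC0.le) hLcpos.le
            _ = 2 * C' * L ^ c := by ring
        rw [div_le_iff₀ hmrpos]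
        have hna_mr : (na a / mr) * mr = na a := div_mul_cancel₀ _ (ne_of_gt hmrpos)
        calc (∑ v : Bits r, ((grpCount S w a (b - v) : ℝ) - na a / mr) ^ 2)
            ≤ D a * (2 * na a) := hS2
          _ ≤ (2 * C' * L ^ c) * (2 * na a) := by
              apply mul_le_mul_of_nonneg_right hDa
              linarith [hnapos a]
          _ = 4 * C' * na a * L ^ c := by ring
          _ ≤ 4 * C' ^ 2 * na a * (L ^ c * L ^ c) := by
              have hCL : (1:ℝ) ≤ C' * L ^ c := by nlinarith
              have hbase : (0:ℝ) ≤ 4 * C' * na a * L ^ c :=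
                mul_nonneg (mul_nonneg (mul_nonneg (by norm_num) hC0.le) (hnapos a)) hLcpos.le
              nlinarith [mul_le_mul_of_nonneg_left hCL hbase]
          _ = 4 * C' ^ 2 * (na a / mr) * (L ^ c * L ^ c) * mr := by
              rw [show 4 * C' ^ 2 * (na a / mr) * (L ^ c * L ^ c) * mr
                  = 4 * C' ^ 2 * ((na a / mr) * mr) * (L ^ c * L ^ c) from by ring, hna_mr]
    rw [hgsq, hcardβ]
    rw [show (1 / M ^ 2) * (∑ v : Bits r, ((grpCount S w a (b - v) : ℝ) - na a / mr) ^ 2) / mr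
        = ((∑ v : Bits r, ((grpCount S w a (b - v) : ℝ) - na a / mr) ^ 2) / mr) * (1 / M ^ 2) from by
          ring]
    rw [show 4 * C' ^ 2 * (na a / mr) * (L ^ c * L ^ c) / M ^ 2
        = (4 * C' ^ 2 * (na a / mr) * (L ^ c * L ^ c)) * (1 / M ^ 2) from by ring]
    exact mul_le_mul_of_nonneg_right hkey (one_div_pos.mpr (pow_pos hMpos 2)).le
  -- total variance
  have hV : ∑ a ∈ A, (∑ v, (g a v) ^ 2) / (Fintype.card (Bits r) : ℝ) ≤ 4 := by
    refine (Finset.sum_le_sum hvar).trans ?_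
    have h2 : ∑ a ∈ A, 4 * C' ^ 2 * (na a / mr) * (L ^ c * L ^ c) / M ^ 2
        = (4 * C' ^ 2 * (L ^ c * L ^ c) / M ^ 2 / mr) * ∑ a ∈ A, na a := by
      rw [Finset.mul_sum]
      refine Finset.sum_congr rfl (fun a _ => ?_)
      ring
    rw [h2, hsumna]
    have hM2 : M ^ 2 = C' ^ 2 * (Real.sqrt (n / mr) + 1) ^ 2 * (L ^ c * L ^ c) := by
      rw [hM]; ring
    have hx : n / mr ≤ (Real.sqrt (n / mr) + 1) ^ 2 := by
      nlinarith [Real.sqrt_nonneg (n / mr), hsqrt_n]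
    have hC2 : (0:ℝ) < C' ^ 2 := pow_pos hC0 2
    have hL2 : (0:ℝ) < L ^ c * L ^ c := mul_pos hLcpos hLcpos
    have hM2pos : (0:ℝ) < M ^ 2 := pow_pos hMpos 2
    rw [div_div, div_mul_eq_mul_div, div_le_iff₀ (mul_pos hM2pos hmrpos)]
    rw [hM2]
    have hxn : n ≤ (Real.sqrt (n / mr) + 1) ^ 2 * mr := by
      rw [div_le_iff₀ hmrpos] at hx
      linarith
    nlinarith [mul_le_mul_of_nonneg_left hxn
      (by positivity : (0:ℝ) ≤ 4 * C' ^ 2 * (L ^ c * L ^ c))]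
  -- Bernstein on both sides
  have hb1 := bernstein_counting (α := Bits s) (β := Bits r) A g u 4 hmean hbdd hV
  have hb2 := bernstein_counting (α := Bits s) (β := Bits r) A (fun a v => - g a v) u 4
    (fun a ha => by rw [Finset.sum_neg_distrib, hmean a ha, neg_zero])
    (fun a ha v => by rw [abs_neg]; exact hbdd a ha v)
    (by simpa using hV)
  have hsumZ : ∀ f : Bits s → Bits r, M * (∑ a ∈ A, g a (f a))
      = (∑ a ∈ A, (grpCount S w a (b - f a) : ℝ)) - n / mr := by
    intro f
    have h1 : ∑ a ∈ A, g a (f a)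
        = (1 / M) * ∑ a ∈ A, ((grpCount S w a (b - f a) : ℝ) - na a / mr) := by
      rw [Finset.mul_sum]
      exact Finset.sum_congr rfl (fun a _ => by simp only [hg])
    have h2 : ∑ a ∈ A, ((grpCount S w a (b - f a) : ℝ) - na a / mr)
        = (∑ a ∈ A, (grpCount S w a (b - f a) : ℝ)) - n / mr := by
      rw [Finset.sum_sub_distrib]
      congr 1
      rw [← Finset.sum_div, hsumna]
    rw [h1, h2]
    field_simp
  have hsplit : ∀ f : Bits s → Bits r,
      (¬ |(∑ a ∈ A, (grpCount S w a (b - f a) : ℝ)) - n / mr| ≤ u * M)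
        → (u ≤ ∑ a ∈ A, g a (f a)) ∨ (u ≤ ∑ a ∈ A, (fun a v => - g a v) a (f a)) := by
    intro f hbad
    push_neg at hbad
    have habs : u * M < M * |∑ a ∈ A, g a (f a)| := by
      calc u * M < |(∑ a ∈ A, (grpCount S w a (b - f a) : ℝ)) - n / mr| := hbad
        _ = |M * (∑ a ∈ A, g a (f a))| := by rw [hsumZ]
        _ = M * |∑ a ∈ A, g a (f a)| := by rw [abs_mul, abs_of_pos hMpos]
    have hlt : u < |∑ a ∈ A, g a (f a)| := by
      by_contra hcon
      push_neg at hcon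
      nlinarith [abs_nonneg (∑ a ∈ A, g a (f a))]
    rcases le_or_gt 0 (∑ a ∈ A, g a (f a)) with hsgn | hsgn
    · left
      rw [abs_of_nonneg hsgn] at hlt
      linarith
    · right
      rw [abs_of_neg hsgn] at hlt
      have hns : ∑ a ∈ A, (fun (a : Bits s) (v : Bits r) => - g a v) a (f a)
          = - ∑ a ∈ A, g a (f a) := by
        rw [← Finset.sum_neg_distrib]
      rw [hns]
      linarith
  refine le_trans (Pr_mono (fun f h => hsplit f h)) ?_
  refine le_trans (Pr_or_le _ _) ?_
  linarith [hb1, hb2]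

end PerBin
section Main

lemma Pr_congr {Ω : Type*} [Fintype Ω] {E F : Ω → Prop} (h : ∀ ω, E ω ↔ F ω) : Pr E = Pr F :=
  le_antisymm (Pr_mono (fun ω he => (h ω).mp he)) (Pr_mono (fun ω hf => (h ω).mpr hf))

set_option maxHeartbeats 2000000 in
lemma Q_induction (c : ℕ) : ∀ γ : ℝ, 0 < γ → ∃ C : ℝ, 1 ≤ C ∧
    ∀ (s r : ℕ) (S : Finset (Fin c → Bits s)) (N : ℕ),
      S.card ≤ N → 2 ^ r ≤ N → 3 ≤ N →
      1 - (N : ℝ) ^ (-γ) ≤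
        Pr (fun T : Fin c → Bits s → Bits r =>
          ∀ b : Bits r,
            |((S.filter fun x => simpleTab T x = b).card : ℝ) - (S.card : ℝ) / (2:ℝ)^r|
              ≤ C * (Real.sqrt ((S.card : ℝ) / (2:ℝ)^r) + 1) * Real.log N ^ c) := by
  induction c with
  | zero =>
    intro γ hγ
    refine ⟨1, le_refl _, ?_⟩
    intro s r S N hn hm hN3
    have hall : ∀ T : Fin 0 → Bits s → Bits r, ∀ b : Bits r,
        |((S.filter fun x => simpleTab T x = b).card : ℝ) - (S.card : ℝ) / (2:ℝ)^r|
          ≤ 1 * (Real.sqrt ((S.card : ℝ) / (2:ℝ)^r) + 1) * Real.log N ^ 0 := by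
      intro T b
      have hS1 : S.card ≤ 1 := by
        have := Finset.card_le_univ S
        simpa using this.trans (le_of_eq (by simp [Fintype.card_fun]))
      have hcnt : (S.filter fun x => simpleTab T x = b).card ≤ 1 :=
        (Finset.card_filter_le _ _).trans hS1
      have h2r : (1:ℝ) ≤ (2:ℝ)^r := one_le_pow₀ (by norm_num)
      have hfrac0 : (0:ℝ) ≤ (S.card : ℝ) / (2:ℝ)^r := by positivity
      have hfrac1 : (S.card : ℝ) / (2:ℝ)^r ≤ 1 := by
        rw [div_le_one (by positivity)]
        calc ((S.card : ℝ)) ≤ 1 := by exact_mod_cast hS1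
          _ ≤ (2:ℝ)^r := h2r
      have hcnt0 : (0:ℝ) ≤ ((S.filter fun x => simpleTab T x = b).card : ℝ) := Nat.cast_nonneg _
      have hcnt1 : ((S.filter fun x => simpleTab T x = b).card : ℝ) ≤ 1 := by exact_mod_cast hcnt
      rw [pow_zero, mul_one, one_mul]
      rw [abs_le]
      constructor <;> nlinarith [Real.sqrt_nonneg ((S.card : ℝ) / (2:ℝ)^r)]
    rw [Pr_eq_one hall]
    have := Real.rpow_nonneg (Nat.cast_nonneg N) (-γ)
    linarith
  | succ c IH =>
    intro γ hγ
    obtain ⟨C', hC'1, hIH⟩ := IH (γ + 2) (by linarith)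
    refine ⟨C' * (γ + 7), by nlinarith, ?_⟩
    intro s r S N hn hm hN3
    -- numeric setup
    have hN3R : (3:ℝ) ≤ (N:ℝ) := by exact_mod_cast hN3
    have hN0 : (0:ℝ) < (N:ℝ) := by linarith
    have hL1 : 1 ≤ Real.log N := by
      have h1 : Real.exp 1 ≤ (N:ℝ) := by nlinarith [Real.exp_one_lt_d9]
      calc (1:ℝ) = Real.log (Real.exp 1) := (Real.log_exp 1).symm
        _ ≤ Real.log N := Real.log_le_log (Real.exp_pos 1) h1
    set L : ℝ := Real.log N with hLdef
    set mr : ℝ := (2:ℝ)^r with hmrdef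
    have hmrpos : (0:ℝ) < mr := by rw [hmrdef]; positivity
    have hmrN : mr ≤ (N:ℝ) := by
      rw [hmrdef, ← two_pow_cast]
      exact_mod_cast hm
    set n : ℝ := (S.card : ℝ) with hndef
    set C : ℝ := C' * (γ + 7) with hCdef
    set t : ℝ := C * (Real.sqrt (n / mr) + 1) * L ^ (c+1) with htdef
    set u : ℝ := (γ + 7) * L with hudef
    have hu0 : 0 ≤ u := by rw [hudef]; nlinarith
    set M : ℝ := C' * (Real.sqrt (n / mr) + 1) * L ^ c with hMdef
    have htu : t = u * M := by
      rw [htdef, hudef, hMdef, hCdef, pow_succ]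
      ring
    set q : ℝ := 2 * (N:ℝ) ^ (-(γ+3)) with hqdef
    have hq0 : 0 ≤ q := by
      rw [hqdef]
      have := Real.rpow_nonneg hN0.le (-(γ+3))
      linarith
    -- Good event on tail tables
    set Good : (Fin c → Bits s → Bits r) → Prop := fun w =>
      ∀ a ∈ headSet S, ∀ v : Bits r,
        |((grpCount S w a v : ℝ)) - ((tailSet S a).card : ℝ) / mr|
          ≤ C' * (Real.sqrt (((tailSet S a).card : ℝ) / mr) + 1) * L ^ c with hGooddef
    -- Claim A : Pr(¬ Good) small
    have claimA : Pr (fun w : Fin c → Bits s → Bits r => ¬ Good w)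
        ≤ (N:ℝ) ^ (-(γ+1)) := by
      have step1 : Pr (fun w : Fin c → Bits s → Bits r => ¬ Good w)
          ≤ ∑ a ∈ headSet S, Pr (fun w : Fin c → Bits s → Bits r =>
              ¬ (∀ v : Bits r, |((grpCount S w a v : ℝ)) - ((tailSet S a).card : ℝ) / mr|
                ≤ C' * (Real.sqrt (((tailSet S a).card : ℝ) / mr) + 1) * L ^ c)) := by
        refine le_trans (Pr_mono ?_) (Pr_exists_le (headSet S) _)
        intro w hw
        by_contra hne
        push_neg at hne
        apply hw
        intro a ha v
        exact hne a ha v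
      refine step1.trans ?_
      have peritem : ∀ a ∈ headSet S, Pr (fun w : Fin c → Bits s → Bits r =>
          ¬ (∀ v : Bits r, |((grpCount S w a v : ℝ)) - ((tailSet S a).card : ℝ) / mr|
            ≤ C' * (Real.sqrt (((tailSet S a).card : ℝ) / mr) + 1) * L ^ c))
          ≤ (N:ℝ) ^ (-(γ+2)) := by
        intro a _
        have hcard : (tailSet S a).card ≤ N := (card_tailSet_le S a).trans hn
        have happ := hIH s r (tailSet S a) N hcard hm hN3
        have hco := Pr_compl (Ω := Fin c → Bits s → Bits r)
          (fun w => ∀ v : Bits r, |(((tailSet S a).filter fun x => simpleTab w x = v).card : ℝ)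
            - ((tailSet S a).card : ℝ) / (2:ℝ)^r|
            ≤ C' * (Real.sqrt (((tailSet S a).card : ℝ) / (2:ℝ)^r) + 1) * Real.log N ^ c)
        have heq : Pr (fun w : Fin c → Bits s → Bits r =>
            ¬ (∀ v : Bits r, |((grpCount S w a v : ℝ)) - ((tailSet S a).card : ℝ) / mr|
              ≤ C' * (Real.sqrt (((tailSet S a).card : ℝ) / mr) + 1) * L ^ c))
            = Pr (fun w : Fin c → Bits s → Bits r =>
            ¬ (∀ v : Bits r, |(((tailSet S a).filter fun x => simpleTab w x = v).card : ℝ)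
              - ((tailSet S a).card : ℝ) / (2:ℝ)^r|
              ≤ C' * (Real.sqrt (((tailSet S a).card : ℝ) / (2:ℝ)^r) + 1) * Real.log N ^ c)) := by
          refine Pr_congr (fun w => ?_)
          rw [hmrdef, hLdef]
          rfl
        rw [heq, hco]
        linarith
      refine le_trans (Finset.sum_le_sum peritem) ?_
      rw [Finset.sum_const, nsmul_eq_mul]
      have hcards : ((headSet S).card : ℝ) ≤ (N:ℝ) := by
        exact_mod_cast (card_headSet_le S).trans hn
      have hr2 : (0:ℝ) ≤ (N:ℝ) ^ (-(γ+2)) := Real.rpow_nonneg hN0.le _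
      calc ((headSet S).card : ℝ) * (N:ℝ) ^ (-(γ+2))
          ≤ (N:ℝ) * (N:ℝ) ^ (-(γ+2)) := mul_le_mul_of_nonneg_right hcards hr2
        _ = (N:ℝ) ^ (-(γ+1)) := by
            rw [show (N:ℝ) * (N:ℝ) ^ (-(γ+2)) = (N:ℝ) ^ (1:ℝ) * (N:ℝ) ^ (-(γ+2)) from by
              rw [Real.rpow_one]]
            rw [← Real.rpow_add hN0]
            congr 1
            ring
    -- Claim B : conditional per-bin bound
    have claimB : ∀ w : Fin c → Bits s → Bits r, Good w → ∀ b : Bits r,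
        Pr (fun f : Bits s → Bits r =>
          ¬ |((S.filter fun x => simpleTab (Fin.cons f w) x = b).card : ℝ) - n / mr| ≤ t)
        ≤ q := by
      intro w hw b
      have hcnt : ∀ f : Bits s → Bits r,
          ((S.filter fun x => simpleTab (Fin.cons f w) x = b).card : ℝ)
            = ∑ a ∈ headSet S, (grpCount S w a (b - f a) : ℝ) := by
        intro f
        have h0 := count_split S (Fin.cons f w) b
        simp only [Fin.tail_cons, Fin.cons_zero] at h0
        rw [h0]
        push_cast
        rfl
      have heq : Pr (fun f : Bits s → Bits r =>
          ¬ |((S.filter fun x => simpleTab (Fin.cons f w) x = b).card : ℝ) - n / mr| ≤ t)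
          = Pr (fun f : Bits s → Bits r =>
          ¬ |(∑ a ∈ headSet S, (grpCount S w a (b - f a) : ℝ)) - n / mr| ≤ u * M) := by
        refine Pr_congr (fun f => ?_)
        rw [hcnt f, htu]
      rw [heq]
      have hw' : ∀ a ∈ headSet S, ∀ v : Bits r,
          |((grpCount S w a v : ℝ)) - ((tailSet S a).card : ℝ) / mr|
            ≤ C' * (Real.sqrt (((tailSet S a).card : ℝ) / mr) + 1) * L ^ c := hw
      have hperbin := perbin_tail S C' L hC'1 hL1 w
        (fun a ha v => by have h := hw' a ha v; rw [hmrdef] at h; exact h) b u hu0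
      have hexp : 2 * Real.exp (4 - u) ≤ q := by
        rw [hqdef, hudef]
        have h1 : 4 - (γ + 7) * L ≤ -((γ+3) * L) := by nlinarith
        have h2 : Real.exp (4 - (γ+7) * L) ≤ Real.exp (-((γ+3) * L)) := Real.exp_le_exp.mpr h1
        have h3 : Real.exp (-((γ+3) * L)) = (N:ℝ) ^ (-(γ+3)) := by
          rw [Real.rpow_def_of_pos hN0, hLdef]
          congr 1
          ring
        rw [← h3]
        linarith
      rw [← hmrdef, ← hndef] at hperbin
      exact le_trans hperbin hexp
    -- assemble
    set Ev : (Fin (c+1) → Bits s → Bits r) → Prop := fun T =>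
      ∀ b : Bits r, |((S.filter fun x => simpleTab T x = b).card : ℝ) - n / mr|
        ≤ C * (Real.sqrt (n / mr) + 1) * L ^ (c+1) with hEvdef
    have hsplitEv : Pr (fun T : Fin (c+1) → Bits s → Bits r => ¬ Ev T)
        ≤ (N:ℝ) ^ (-(γ+1)) + 2 * (N:ℝ) ^ (-(γ+2)) := by
      have hstep : Pr (fun T : Fin (c+1) → Bits s → Bits r => ¬ Ev T)
          ≤ Pr (fun T : Fin (c+1) → Bits s → Bits r => ¬ Good (Fin.tail T))
            + Pr (fun T : Fin (c+1) → Bits s → Bits r => Good (Fin.tail T) ∧ ¬ Ev T) := by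
        refine le_trans (Pr_mono ?_) (Pr_or_le _ _)
        intro T hT
        by_cases hG : Good (Fin.tail T)
        · exact Or.inr ⟨hG, hT⟩
        · exact Or.inl hG
      refine hstep.trans ?_
      have h1 : Pr (fun T : Fin (c+1) → Bits s → Bits r => ¬ Good (Fin.tail T))
          = Pr (fun w : Fin c → Bits s → Bits r => ¬ Good w) :=
        Pr_tail (fun w => ¬ Good w)
      have h2 : Pr (fun T : Fin (c+1) → Bits s → Bits r => Good (Fin.tail T) ∧ ¬ Ev T)
          ≤ 2 * (N:ℝ) ^ (-(γ+2)) := by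
        have hstep2 : Pr (fun T : Fin (c+1) → Bits s → Bits r => Good (Fin.tail T) ∧ ¬ Ev T)
            ≤ ∑ b : Bits r, Pr (fun T : Fin (c+1) → Bits s → Bits r =>
                Good (Fin.tail T) ∧
                  ¬ |((S.filter fun x => simpleTab T x = b).card : ℝ) - n / mr| ≤ t) := by
          refine le_trans (Pr_mono ?_) (Pr_exists_le Finset.univ _)
          intro T hT
          obtain ⟨hG, hbad⟩ := hT
          by_contra hne
          push_neg at hne
          apply hbad
          intro b
          exact hne b (Finset.mem_univ b) hG
        refine hstep2.trans ?_
        have hper : ∀ b : Bits r, Pr (fun T : Fin (c+1) → Bits s → Bits r =>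
            Good (Fin.tail T) ∧
              ¬ |((S.filter fun x => simpleTab T x = b).card : ℝ) - n / mr| ≤ t) ≤ q := by
          intro b
          exact Pr_cons_cond Good
            (fun T => ¬ |((S.filter fun x => simpleTab T x = b).card : ℝ) - n / mr| ≤ t) q hq0
            (fun w hw => claimB w hw b)
        refine le_trans (Finset.sum_le_sum (fun b _ => hper b)) ?_
        rw [Finset.sum_const, Finset.card_univ, card_bits, nsmul_eq_mul]
        have h2r : ((2^r : ℕ) : ℝ) ≤ (N:ℝ) := by exact_mod_cast hm
        have hq' : (0:ℝ) ≤ (N:ℝ) ^ (-(γ+3)) := Real.rpow_nonneg hN0.le _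
        rw [hqdef]
        calc ((2^r : ℕ) : ℝ) * (2 * (N:ℝ) ^ (-(γ+3)))
            ≤ (N:ℝ) * (2 * (N:ℝ) ^ (-(γ+3))) := by
              apply mul_le_mul_of_nonneg_right h2r
              linarith
          _ = 2 * ((N:ℝ) ^ (1:ℝ) * (N:ℝ) ^ (-(γ+3))) := by rw [Real.rpow_one]; ring
          _ = 2 * (N:ℝ) ^ (-(γ+2)) := by
              rw [← Real.rpow_add hN0]
              congr 2
              ring
      linarith [claimA, h1, h2]
    -- final arithmetic
    have hfin : (N:ℝ) ^ (-(γ+1)) + 2 * (N:ℝ) ^ (-(γ+2)) ≤ (N:ℝ) ^ (-γ) := by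
      have ha : (0:ℝ) ≤ (N:ℝ) ^ (-γ) := Real.rpow_nonneg hN0.le _
      have hinv0 : (0:ℝ) ≤ ((N:ℝ))⁻¹ := inv_nonneg.mpr hN0.le
      have hinv3 : ((N:ℝ))⁻¹ ≤ 1/3 := by
        rw [inv_le_comm₀ (by linarith) (by norm_num)]
        linarith
      have e1 : (N:ℝ) ^ (-(γ+1)) = (N:ℝ) ^ (-γ) * ((N:ℝ))⁻¹ := by
        rw [← Real.rpow_neg_one (N:ℝ), ← Real.rpow_add hN0]
        congr 1
        ring
      have e2 : (N:ℝ) ^ (-(γ+2)) = (N:ℝ) ^ (-γ) * ((N:ℝ))⁻¹ * ((N:ℝ))⁻¹ := by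
        rw [← Real.rpow_neg_one (N:ℝ), ← Real.rpow_add hN0, ← Real.rpow_add hN0]
        congr 1
        ring
      rw [e1, e2]
      nlinarith [mul_le_mul_of_nonneg_left hinv3 ha,
        mul_le_mul_of_nonneg_left (mul_le_mul_of_nonneg_left hinv3 ha) hinv0,
        mul_nonneg ha hinv0, mul_nonneg (mul_nonneg ha hinv0) hinv0]
    have hEvPr := Pr_compl (Ω := Fin (c+1) → Bits s → Bits r) Ev
    have hgoal : 1 - (N:ℝ) ^ (-γ) ≤ Pr Ev := by
      have := hsplitEv.trans hfin
      linarith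
    refine le_trans hgoal (le_of_eq ?_)
    refine Pr_congr (fun T => ?_)
    rw [hEvdef, hndef, hmrdef, hLdef, hCdef]

end Main

/-- All-bins concentration for simple tabulation with few bins
(Theorem 1, equation (6)): for constants `c ≥ 1`, `γ > 0` there is a constant `C` such
that when `n ≥ m` keys `S` are hashed into `m = 2^r` bins by random simple tabulation,
then with probability at least `1 − n^{−γ}` every bin `b` receives
`n/m ± C·√(n/m)·(log n)^c` keys. -/
theorem simple_tabulation_all_bins (c : ℕ) (hc : 1 ≤ c) (γ : ℝ) (hγ : 0 < γ) :
    ∃ C : ℝ,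
      ∀ (s r : ℕ) (S : Finset (Fin c → Bits s)),
        2 ^ r ≤ S.card →
        1 - (S.card : ℝ) ^ (-γ) ≤
          Pr (fun T : Fin c → Bits s → Bits r =>
            ∀ b : Bits r,
              |((S.filter fun x => simpleTab T x = b).card : ℝ) -
                  (S.card : ℝ) / (2 : ℝ) ^ r| ≤
                C * Real.sqrt ((S.card : ℝ) / (2 : ℝ) ^ r) * Real.log (S.card) ^ c) := by
  obtain ⟨C₀, hC₀1, hQ⟩ := Q_induction c γ hγ
  refine ⟨max (2 * C₀) (2 / Real.log 2 ^ c), ?_⟩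
  intro s r S hm
  have hn1 : 1 ≤ S.card := le_trans (Nat.one_le_two_pow) hm
  have hnn : (0:ℝ) ≤ (S.card : ℝ) ^ (-γ) := Real.rpow_nonneg (Nat.cast_nonneg _) _
  have hmr1 : (1:ℝ) ≤ (2:ℝ)^r := one_le_pow₀ (by norm_num)
  have hmrpos : (0:ℝ) < (2:ℝ)^r := by positivity
  have hmrn : ((2:ℝ)^r) ≤ (S.card : ℝ) := by
    rw [← two_pow_cast]
    exact_mod_cast hm
  have hsq1 : (1:ℝ) ≤ Real.sqrt ((S.card : ℝ) / (2:ℝ)^r) := by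
    rw [show (1:ℝ) = Real.sqrt 1 from (Real.sqrt_one).symm]
    apply Real.sqrt_le_sqrt
    rw [le_div_iff₀ hmrpos]
    linarith
  rcases Nat.lt_or_ge S.card 3 with hsmall | hbig
  · -- S.card = 1 or 2 : the event is deterministic
    have hall : ∀ T : Fin c → Bits s → Bits r, ∀ b : Bits r,
        |((S.filter fun x => simpleTab T x = b).card : ℝ) - (S.card : ℝ) / (2:ℝ)^r|
          ≤ max (2 * C₀) (2 / Real.log 2 ^ c) * Real.sqrt ((S.card : ℝ) / (2:ℝ)^r)
              * Real.log (S.card) ^ c := by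
      intro T b
      interval_cases h : S.card
      · -- card = 1 : r = 0, everything exact
        have hr0 : r = 0 := by
          by_contra hr
          have := (Nat.one_lt_two_pow_iff (n := r)).mpr hr
          omega
        subst hr0
        have hfil : S.filter (fun x => simpleTab T x = b) = S :=
          Finset.filter_true_of_mem (fun x _ => Subsingleton.elim _ _)
        rw [hfil, h]
        have hlog1 : Real.log ((1:ℕ):ℝ) = 0 := by norm_num
        rw [hlog1, zero_pow (by omega : c ≠ 0)]
        norm_num
      · -- card = 2
        have hcnt2 : ((S.filter fun x => simpleTab T x = b).card : ℝ) ≤ 2 := by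
          exact_mod_cast (Finset.card_filter_le S _).trans (le_of_eq h)
        have hcnt0 : (0:ℝ) ≤ ((S.filter fun x => simpleTab T x = b).card : ℝ) :=
          Nat.cast_nonneg _
        push_cast at hsq1 ⊢
        have hlog2c : (0:ℝ) < Real.log 2 ^ c := pow_pos (Real.log_pos (by norm_num)) c
        have hfrac0 : (0:ℝ) ≤ (2:ℝ)/(2:ℝ)^r := by positivity
        have hfrac2 : (2:ℝ)/(2:ℝ)^r ≤ 2 := by
          rw [div_le_iff₀ hmrpos]
          nlinarith
        have hmax0 : (0:ℝ) ≤ max (2 * C₀) (2 / Real.log 2 ^ c) :=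
          le_trans (by positivity : (0:ℝ) ≤ 2 / Real.log 2 ^ c) (le_max_right _ _)
        have hrhs : (2:ℝ) ≤ max (2 * C₀) (2 / Real.log 2 ^ c)
            * Real.sqrt ((2:ℝ)/(2:ℝ)^r) * Real.log 2 ^ c := by
          calc (2:ℝ) = (2 / Real.log 2 ^ c) * 1 * Real.log 2 ^ c := by field_simp
            _ ≤ max (2 * C₀) (2 / Real.log 2 ^ c)
                * Real.sqrt ((2:ℝ)/(2:ℝ)^r) * Real.log 2 ^ c := by
              apply mul_le_mul_of_nonneg_right _ hlog2c.le
              exact mul_le_mul (le_max_right _ _) hsq1 (by norm_num) hmax0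
        rw [abs_le]
        constructor <;> nlinarith [hrhs]
    rw [Pr_eq_one hall]
    linarith
  · -- S.card ≥ 3 : use the main bound with N = S.card
    have happ := hQ s r S S.card le_rfl hm hbig
    refine le_trans happ (Pr_mono ?_)
    intro T hT b
    have h1 := hT b
    have hlogpos : (0:ℝ) < Real.log (S.card) := by
      apply Real.log_pos
      have : (3:ℝ) ≤ (S.card:ℝ) := by exact_mod_cast hbig
      linarith
    have hlogc : (0:ℝ) ≤ Real.log (S.card) ^ c := by positivity
    refine h1.trans ?_
    have hCmax : 2 * C₀ ≤ max (2 * C₀) (2 / Real.log 2 ^ c) := le_max_left _ _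
    have hC₀0 : (0:ℝ) < C₀ := lt_of_lt_of_le one_pos hC₀1
    calc C₀ * (Real.sqrt ((S.card:ℝ) / (2:ℝ)^r) + 1) * Real.log (S.card) ^ c
        ≤ C₀ * (2 * Real.sqrt ((S.card:ℝ) / (2:ℝ)^r)) * Real.log (S.card) ^ c := by
          apply mul_le_mul_of_nonneg_right _ hlogc
          apply mul_le_mul_of_nonneg_left _ hC₀0.le
          linarith
      _ = (2 * C₀) * Real.sqrt ((S.card:ℝ) / (2:ℝ)^r) * Real.log (S.card) ^ c := by ring
      _ ≤ max (2 * C₀) (2 / Real.log 2 ^ c) * Real.sqrt ((S.card:ℝ) / (2:ℝ)^r)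
            * Real.log (S.card) ^ c := by
          apply mul_le_mul_of_nonneg_right _ hlogc
          apply mul_le_mul_of_nonneg_right hCmax
          linarith [hsq1]
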